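/- arXiv:2511.00931 — 5 statements merged into one kernel-verified Lean document; each statement's English description precedes it below -/
import Mathlib

section
/- Suppose M, N satisfy (h₁) with exponent α ∈ ℝ and (h₂) with exponent β ∈ ℕ ∪ {0}. Let u ∈ C²(Ω) and let Φ : I → ℝ be a C² function on an open interval I containing the range of u with Φ' > 0 on I. Then for every x ∈ Ω: M(x, D(Φ∘u)(x), D²(Φ∘u)(x)) = (Φ'(u(x)))^{α+β+1} M(x, Du(x), D²u(x)) + (Φ'(u(x)))^{α+β} Φ''(u(x)) N(x, Du(x), D²u(x)). -/
open Real Filter Set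

/-- Gradient of `u` at `x` (vector of partial derivatives). -/
noncomputable def vgrad {n : ℕ} (u : (Fin n → ℝ) → ℝ) (x : Fin n → ℝ) : Fin n → ℝ :=
  fun i => fderiv ℝ u x (Pi.single i 1)

/-- Hessian matrix of `u` at `x`. -/
noncomputable def vhess {n : ℕ} (u : (Fin n → ℝ) → ℝ) (x : Fin n → ℝ) :
    Matrix (Fin n) (Fin n) ℝ :=
  Matrix.of fun i j => fderiv ℝ (fun y => fderiv ℝ u y (Pi.single j 1)) x (Pi.single i 1)

noncomputable def Gg (g : ℝ → ℝ) (s : ℝ) : ℝ := ∫ τ in (0:ℝ)..s, g τ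

noncomputable def Phig (g : ℝ → ℝ) (t : ℝ) : ℝ := ∫ s in (0:ℝ)..t, Real.exp (Gg g s)

/-- Condition `(g₀)`. -/
def g0cond (g : ℝ → ℝ) : Prop :=
  ∃ s₀ : ℝ, 0 ≤ s₀ ∧ (∀ s, s₀ ≤ s → 0 ≤ g s) ∧ (∀ s, s ≤ -s₀ → g s ≤ 0)

lemma clm_apply_eq_aux (L : ℝ →L[ℝ] ℝ) (s : ℝ) : L s = s * L 1 := by
  conv_lhs => rw [show s = s • (1:ℝ) by simp, map_smul]
  simp [smul_eq_mul]

/-- Chain rule for gradient and Hessian under a C² change of variables. -/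
lemma chain_aux {n : ℕ} (Ω : Set (Fin n → ℝ)) (hΩ : IsOpen Ω)
    (u : (Fin n → ℝ) → ℝ) (hu : ContDiffOn ℝ 2 u Ω)
    (I : Set ℝ) (hIopen : IsOpen I)
    (hrange : u '' Ω ⊆ I)
    (Φ : ℝ → ℝ) (hΦ : ContDiffOn ℝ 2 Φ I) (x : Fin n → ℝ) (hx : x ∈ Ω) :
    vhess (Φ ∘ u) x = (deriv Φ (u x)) • vhess u x
      + (deriv (deriv Φ) (u x)) • Matrix.vecMulVec (vgrad u x) (vgrad u x)
      ∧ vgrad (Φ ∘ u) x = (deriv Φ (u x)) • vgrad u x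
      ∧ (vhess u x).IsSymm := by
  have hxI : u x ∈ I := hrange ⟨x, hx, rfl⟩
  have huΩ : ∀ y ∈ Ω, ContDiffAt ℝ 2 u y := fun y hy => (hu y hy).contDiffAt (hΩ.mem_nhds hy)
  have hΦI : ∀ t ∈ I, ContDiffAt ℝ 2 Φ t := fun t ht => (hΦ t ht).contDiffAt (hIopen.mem_nhds ht)
  have hud : ∀ y ∈ Ω, DifferentiableAt ℝ u y := fun y hy => (huΩ y hy).differentiableAt two_ne_zero
  have hΦd : ∀ t ∈ I, DifferentiableAt ℝ Φ t := fun t ht => (hΦI t ht).differentiableAt two_ne_zero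
  have hΦ'c : ContDiffOn ℝ 1 (deriv Φ) I := hΦ.deriv_of_isOpen hIopen le_rfl
  have hΦ'd : DifferentiableAt ℝ (deriv Φ) (u x) :=
    ((hΦ'c _ hxI).contDiffAt (hIopen.mem_nhds hxI)).differentiableAt one_ne_zero
  have hu'c : ContDiffOn ℝ 1 (fderiv ℝ u) Ω := hu.fderiv_of_isOpen hΩ le_rfl
  have hu'd : DifferentiableAt ℝ (fderiv ℝ u) x :=
    ((hu'c _ hx).contDiffAt (hΩ.mem_nhds hx)).differentiableAt one_ne_zero
  have hgrad : ∀ y ∈ Ω, ∀ v, fderiv ℝ (Φ ∘ u) y v = deriv Φ (u y) * fderiv ℝ u y v := by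
    intro y hy v
    have hyI : u y ∈ I := hrange ⟨y, hy, rfl⟩
    rw [fderiv_comp y (hΦd _ hyI) (hud _ hy)]
    simp only [ContinuousLinearMap.coe_comp', Function.comp_apply]
    rw [clm_apply_eq_aux, fderiv_apply_one_eq_deriv, mul_comm]
  have hFd : ∀ j, DifferentiableAt ℝ (fun y => fderiv ℝ u y (Pi.single j 1)) x := by
    intro j
    exact hu'd.clm_apply (differentiableAt_const _)
  have hFderiv : ∀ i j, fderiv ℝ (fun y => fderiv ℝ u y (Pi.single j 1)) x (Pi.single i 1)
      = fderiv ℝ (fderiv ℝ u) x (Pi.single i 1) (Pi.single j 1) := by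
    intro i j
    rw [fderiv_clm_apply hu'd (differentiableAt_const _)]
    simp
  have hsymm : (vhess u x).IsSymm := by
    have hS := (huΩ x hx).isSymmSndFDerivAt (by simp)
    ext i j
    simp only [Matrix.transpose_apply, vhess, Matrix.of_apply]
    rw [hFderiv, hFderiv, hS]
  have hcomp : DifferentiableAt ℝ (fun y => deriv Φ (u y)) x :=
    hΦ'd.comp x (hud x hx)
  have hcompderiv : ∀ v, fderiv ℝ (fun y => deriv Φ (u y)) x v
      = deriv (deriv Φ) (u x) * fderiv ℝ u x v := by
    intro v
    rw [show (fun y => deriv Φ (u y)) = deriv Φ ∘ u from rfl,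
      fderiv_comp x hΦ'd (hud x hx)]
    simp only [ContinuousLinearMap.coe_comp', Function.comp_apply]
    rw [clm_apply_eq_aux, fderiv_apply_one_eq_deriv, mul_comm]
  have hhess : vhess (Φ ∘ u) x = (deriv Φ (u x)) • vhess u x
      + (deriv (deriv Φ) (u x)) • Matrix.vecMulVec (vgrad u x) (vgrad u x) := by
    ext i j
    have heq : (fun y => fderiv ℝ (Φ ∘ u) y (Pi.single j 1))
        =ᶠ[nhds x] fun y => deriv Φ (u y) * fderiv ℝ u y (Pi.single j 1) := by
      filter_upwards [hΩ.mem_nhds hx] with y hy using hgrad y hy _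
    simp only [vhess, Matrix.of_apply, Matrix.add_apply, Matrix.smul_apply,
      Matrix.vecMulVec_apply, smul_eq_mul]
    rw [heq.fderiv_eq, fderiv_fun_mul hcomp (hFd j)]
    simp only [ContinuousLinearMap.add_apply, ContinuousLinearMap.smul_apply, smul_eq_mul]
    rw [hcompderiv]
    simp only [vgrad]
    ring
  refine ⟨hhess, funext fun i => ?_, hsymm⟩
  simp only [vgrad, Pi.smul_apply, smul_eq_mul]
  exact hgrad x hx _

/-- chain rule identity for operators satisfying (h₁), (h₂) under a C² change of
variables Φ with Φ' > 0 on an open interval containing the range of u. -/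
theorem stmt3 {n : ℕ} (Ω : Set (Fin n → ℝ)) (hΩ : IsOpen Ω)
    (M N : (Fin n → ℝ) → (Fin n → ℝ) → Matrix (Fin n) (Fin n) ℝ → ℝ)
    (α : ℝ) (β : ℕ)
    (h1 : ∀ x ∈ Ω, ∀ lam : ℝ, lam ≠ 0 → ∀ (p : Fin n → ℝ) (X : Matrix (Fin n) (Fin n) ℝ),
      X.IsSymm → M x (lam • p) X = |lam| ^ α * M x p X)
    (h2 : ∀ x ∈ Ω, ∀ (p : Fin n → ℝ) (X : Matrix (Fin n) (Fin n) ℝ), X.IsSymm →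
      ∀ γ : ℝ, γ ≠ 0 → ∀ σ : ℝ,
        M x p (γ • X + σ • Matrix.vecMulVec p p)
          = γ ^ (β + 1) * M x p X + σ * γ ^ β * N x p X)
    (u : (Fin n → ℝ) → ℝ) (hu : ContDiffOn ℝ 2 u Ω)
    (I : Set ℝ) (hIopen : IsOpen I) (hIinterval : I.OrdConnected)
    (hrange : u '' Ω ⊆ I)
    (Φ : ℝ → ℝ) (hΦ : ContDiffOn ℝ 2 Φ I) (hΦ' : ∀ t ∈ I, 0 < deriv Φ t) :
    ∀ x ∈ Ω,
      M x (vgrad (Φ ∘ u) x) (vhess (Φ ∘ u) x)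
        = (deriv Φ (u x)) ^ (α + (β : ℝ) + 1) * M x (vgrad u x) (vhess u x)
          + (deriv Φ (u x)) ^ (α + (β : ℝ)) * deriv (deriv Φ) (u x)
              * N x (vgrad u x) (vhess u x) := by
  intro x hx
  obtain ⟨hhess, hgrad, hsymm⟩ := chain_aux Ω hΩ u hu I hIopen hrange Φ hΦ x hx
  have hxI : u x ∈ I := hrange ⟨x, hx, rfl⟩
  set lam := deriv Φ (u x) with hlamdef
  set σ := deriv (deriv Φ) (u x) with hσdef
  have hlam0 : 0 < lam := hΦ' _ hxI
  set p := vgrad u x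
  set X := vhess u x
  have hYsymm : ((lam • X) + σ • Matrix.vecMulVec p p).IsSymm := by
    unfold Matrix.IsSymm
    rw [Matrix.transpose_add, Matrix.transpose_smul, Matrix.transpose_smul, hsymm]
    congr 1
    ext i j
    simp [Matrix.vecMulVec_apply, mul_comm]
  rw [hgrad, hhess, h1 x hx lam hlam0.ne' _ _ hYsymm,
    h2 x hx _ _ hsymm lam hlam0.ne' σ, abs_of_pos hlam0]
  rw [show lam ^ (β + 1) = lam ^ ((β : ℝ) + 1) by
      rw [← Real.rpow_natCast lam (β + 1)]; push_cast; ring_nf,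
    show lam ^ β = lam ^ (β : ℝ) from (Real.rpow_natCast lam β).symm]
  simp only [Real.rpow_add hlam0, Real.rpow_one]
  ring
end

section
/- Let f : Ω×ℝ → ℝ be continuous, let g : ℝ → ℝ be continuous satisfying (g₀), and suppose M, N satisfy (h₁) with exponent α ∈ ℝ and (h₂) with exponent β ∈ ℕ ∪ {0}. If u ∈ C²(Ω) satisfies M(x, Du, D²u) + g(u) N(x, Du, D²u) + f(x, u) = 0 at every point of Ω, then v = Φ_g ∘ u satisfies M(x, Dv, D²v) + h(x, v) = 0 at every point of Ω, where h(x, s) = e^{(α+β+1)G(Φ_g⁻¹(s))} f(x, Φ_g⁻¹(s)). -/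
open Real Filter Set

lemma hasDerivAt_Gg {g : ℝ → ℝ} (hg : Continuous g) (t : ℝ) :
    HasDerivAt (Gg g) (g t) t :=
  intervalIntegral.integral_hasDerivAt_right (hg.intervalIntegrable 0 t)
    (hg.stronglyMeasurableAtFilter _ _) hg.continuousAt

lemma continuous_Eg {g : ℝ → ℝ} (hg : Continuous g) :
    Continuous (fun s => Real.exp (Gg g s)) :=
  Real.continuous_exp.comp (continuous_iff_continuousAt.2
    fun t => (hasDerivAt_Gg hg t).continuousAt)

lemma hasDerivAt_Phig {g : ℝ → ℝ} (hg : Continuous g) (t : ℝ) :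
    HasDerivAt (Phig g) (Real.exp (Gg g t)) t :=
  intervalIntegral.integral_hasDerivAt_right
    ((continuous_Eg hg).intervalIntegrable 0 t)
    ((continuous_Eg hg).stronglyMeasurableAtFilter _ _) (continuous_Eg hg).continuousAt

lemma hasDerivAt_Eg {g : ℝ → ℝ} (hg : Continuous g) (t : ℝ) :
    HasDerivAt (fun s => Real.exp (Gg g s)) (g t * Real.exp (Gg g t)) t := by
  simpa [mul_comm] using (hasDerivAt_Gg hg t).exp

/-- Theorem 1, forward direction: if u ∈ C²(Ω) solves
M(x,Du,D²u) + g(u)N(x,Du,D²u) + f(x,u) = 0, then v = Φ_g ∘ u solves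
M(x,Dv,D²v) + h(x,v) = 0 with h(x,s) = e^{(α+β+1)G(Φ_g⁻¹(s))} f(x,Φ_g⁻¹(s)). -/
theorem stmt4 {n : ℕ} (Ω : Set (Fin n → ℝ)) (hΩ : IsOpen Ω)
    (f : (Fin n → ℝ) → ℝ → ℝ)
    (hf : ContinuousOn (fun q : (Fin n → ℝ) × ℝ => f q.1 q.2) (Ω ×ˢ Set.univ))
    (g : ℝ → ℝ) (hg : Continuous g) (hg0 : g0cond g)
    (M N : (Fin n → ℝ) → (Fin n → ℝ) → Matrix (Fin n) (Fin n) ℝ → ℝ)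
    (hM : ContinuousOn
      (fun q : (Fin n → ℝ) × (Fin n → ℝ) × Matrix (Fin n) (Fin n) ℝ => M q.1 q.2.1 q.2.2)
      (Ω ×ˢ Set.univ))
    (α : ℝ) (β : ℕ)
    (h1 : ∀ x ∈ Ω, ∀ lam : ℝ, lam ≠ 0 → ∀ (p : Fin n → ℝ) (X : Matrix (Fin n) (Fin n) ℝ),
      X.IsSymm → M x (lam • p) X = |lam| ^ α * M x p X)
    (h2 : ∀ x ∈ Ω, ∀ (p : Fin n → ℝ) (X : Matrix (Fin n) (Fin n) ℝ), X.IsSymm →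
      ∀ γ : ℝ, γ ≠ 0 → ∀ σ : ℝ,
        M x p (γ • X + σ • Matrix.vecMulVec p p)
          = γ ^ (β + 1) * M x p X + σ * γ ^ β * N x p X)
    (Φinv : ℝ → ℝ) (hleft : ∀ t : ℝ, Φinv (Phig g t) = t)
    (hright : ∀ s : ℝ, Phig g (Φinv s) = s)
    (u : (Fin n → ℝ) → ℝ) (hu : ContDiffOn ℝ 2 u Ω)
    (hsol : ∀ x ∈ Ω,
      M x (vgrad u x) (vhess u x) + g (u x) * N x (vgrad u x) (vhess u x) + f x (u x) = 0) :
    ∀ x ∈ Ω,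
      M x (vgrad (Phig g ∘ u) x) (vhess (Phig g ∘ u) x)
        + Real.exp ((α + (β : ℝ) + 1) * Gg g (Φinv ((Phig g ∘ u) x)))
            * f x (Φinv ((Phig g ∘ u) x)) = 0 := by
  intro x hx
  have hCA : ∀ y ∈ Ω, ContDiffAt ℝ 2 u y := fun y hy => (hu y hy).contDiffAt (hΩ.mem_nhds hy)
  have hdiff : ∀ y ∈ Ω, DifferentiableAt ℝ u y := fun y hy =>
    (hCA y hy).differentiableAt (by norm_num)
  set E : ℝ → ℝ := fun s => Real.exp (Gg g s) with hE
  -- derivative of v = Phig g ∘ u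
  have hv : ∀ y ∈ Ω, HasFDerivAt (Phig g ∘ u) (E (u y) • fderiv ℝ u y) y := fun y hy =>
    (hasDerivAt_Phig hg (u y)).comp_hasFDerivAt y (hdiff y hy).hasFDerivAt
  set p : Fin n → ℝ := vgrad u x with hp
  set H : Matrix (Fin n) (Fin n) ℝ := vhess u x with hHdef
  -- gradient of v
  have hgradv : vgrad (Phig g ∘ u) x = E (u x) • p := by
    funext i
    simp only [vgrad, (hv x hx).fderiv, ContinuousLinearMap.coe_smul', Pi.smul_apply,
      smul_eq_mul, hp]
  -- second derivative of u exists
  have hF : DifferentiableAt ℝ (fderiv ℝ u) x :=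
    ((hCA x hx).fderiv_right (m := 1) (by norm_num)).differentiableAt (by norm_num)
  have hbdiff : ∀ j, DifferentiableAt ℝ (fun y => fderiv ℝ u y (Pi.single j 1)) x :=
    fun j => hF.clm_apply (differentiableAt_const _)
  -- Hessian of v
  have hEu : HasFDerivAt (fun y => E (u y)) ((g (u x) * E (u x)) • fderiv ℝ u x) x :=
    (hasDerivAt_Eg hg (u x)).comp_hasFDerivAt x (hdiff x hx).hasFDerivAt
  have hhessv : vhess (Phig g ∘ u) x
      = E (u x) • H + (g (u x) * E (u x)) • Matrix.vecMulVec p p := by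
    ext i j
    have hev : (fun y => fderiv ℝ (Phig g ∘ u) y (Pi.single j 1))
        =ᶠ[nhds x] (fun y => E (u y) * fderiv ℝ u y (Pi.single j 1)) := by
      filter_upwards [hΩ.mem_nhds hx] with y hy
      rw [(hv y hy).fderiv]
      rfl
    have h1' : vhess (Phig g ∘ u) x i j
        = fderiv ℝ (fun y => E (u y) * fderiv ℝ u y (Pi.single j 1)) x (Pi.single i 1) := by
      simp only [vhess, Matrix.of_apply]
      rw [hev.fderiv_eq]
    rw [h1', fderiv_fun_mul (hEu.differentiableAt) (hbdiff j), hEu.fderiv]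
    simp only [ContinuousLinearMap.add_apply, ContinuousLinearMap.coe_smul', Pi.smul_apply,
      smul_eq_mul, Matrix.add_apply, Matrix.smul_apply, Matrix.vecMulVec_apply, hHdef, vhess,
      Matrix.of_apply, hp, vgrad]
    ring
  -- symmetry of the Hessian of u
  have hsymm2 : IsSymmSndFDerivAt ℝ u x :=
    (hCA x hx).isSymmSndFDerivAt (by norm_num)
  have hHentry : ∀ i j, H i j = fderiv ℝ (fderiv ℝ u) x (Pi.single i 1) (Pi.single j 1) := by
    intro i j
    simp only [hHdef, vhess, Matrix.of_apply]
    rw [fderiv_clm_apply hF (differentiableAt_const _)]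
    simp
  have hHsymm : H.IsSymm := by
    apply Matrix.IsSymm.ext
    intro i j
    rw [hHentry j i, hHentry i j]
    exact hsymm2 _ _
  have hppsymm : (Matrix.vecMulVec p p).IsSymm := by
    apply Matrix.IsSymm.ext
    intro i j
    simp [Matrix.vecMulVec_apply, mul_comm]
  have hXsymm : (E (u x) • H + (g (u x) * E (u x)) • Matrix.vecMulVec p p).IsSymm :=
    (hHsymm.smul _).add (hppsymm.smul _)
  -- algebra
  have hEpos : (0:ℝ) < E (u x) := Real.exp_pos _
  have hEne : E (u x) ≠ 0 := ne_of_gt hEpos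
  have hinv : Φinv ((Phig g ∘ u) x) = u x := hleft (u x)
  rw [hinv, hgradv, hhessv,
    h1 x hx (E (u x)) hEne p _ hXsymm,
    h2 x hx p H hHsymm (E (u x)) hEne (g (u x) * E (u x))]
  set G0 : ℝ := Gg g (u x) with hG0
  have habs : |E (u x)| ^ α = Real.exp (α * G0) := by
    rw [abs_of_pos hEpos, hE]
    rw [mul_comm, Real.exp_mul]
  have hpow1 : E (u x) ^ (β + 1) = Real.exp (((β:ℝ) + 1) * G0) := by
    show Real.exp (Gg g (u x)) ^ (β + 1) = _
    rw [← Real.exp_nat_mul]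
    push_cast
    ring_nf
    rfl
  have hpow2 : E (u x) ^ β = Real.exp ((β:ℝ) * G0) := by
    show Real.exp (Gg g (u x)) ^ β = _
    rw [← Real.exp_nat_mul]
  rw [habs, hpow1, hpow2]
  have e1 : Real.exp (α * G0) * Real.exp (((β:ℝ) + 1) * G0)
      = Real.exp ((α + (β:ℝ) + 1) * G0) := by
    rw [← Real.exp_add]
    congr 1
    ring
  have e2 : Real.exp (α * G0) * (E (u x) * Real.exp ((β:ℝ) * G0))
      = Real.exp ((α + (β:ℝ) + 1) * G0) := by
    show Real.exp (α * G0) * (Real.exp (Gg g (u x)) * Real.exp ((β:ℝ) * G0)) = _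
    rw [← Real.exp_add, ← Real.exp_add]
    congr 1
    show α * G0 + (G0 + (β:ℝ) * G0) = _
    ring
  linear_combination Real.exp ((α + (β:ℝ) + 1) * G0) * hsol x hx
    + M x p H * e1 + g (u x) * N x p H * e2
end

section
/- Let f : Ω×ℝ → ℝ be continuous, let g : ℝ → ℝ be continuous satisfying (g₀), and suppose M, N satisfy (h₁) with exponent α ∈ ℝ and (h₂) with exponent β ∈ ℕ ∪ {0}. If u : Ω → ℝ is a continuous viscosity solution of M(x, Dw, D²w) + g(w) N(x, Dw, D²w) + f(x, w) = 0 in Ω, then v = Φ_g ∘ u is a viscosity solution of M(x, Dw, D²w) + h(x, w) = 0 in Ω, where h(x, s) = e^{(α+β+1)G(Φ_g⁻¹(s))} f(x, Φ_g⁻¹(s)). -/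
open Real Filter Set

/-- Viscosity subsolution of `𝓕(x, w, Dw, D²w) = 0` in `Ω`. -/
def ViscositySubsolution {n : ℕ} (Ω : Set (Fin n → ℝ))
    (F : (Fin n → ℝ) → ℝ → (Fin n → ℝ) → Matrix (Fin n) (Fin n) ℝ → ℝ)
    (w : (Fin n → ℝ) → ℝ) : Prop :=
  ∀ φ : (Fin n → ℝ) → ℝ, ContDiffOn ℝ 2 φ Ω →
    ∀ x₀ ∈ Ω, IsLocalMaxOn (fun x => w x - φ x) Ω x₀ →
      F x₀ (w x₀) (vgrad φ x₀) (vhess φ x₀) ≤ 0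

/-- Viscosity supersolution of `𝓕(x, w, Dw, D²w) = 0` in `Ω`. -/
def ViscositySupersolution {n : ℕ} (Ω : Set (Fin n → ℝ))
    (F : (Fin n → ℝ) → ℝ → (Fin n → ℝ) → Matrix (Fin n) (Fin n) ℝ → ℝ)
    (w : (Fin n → ℝ) → ℝ) : Prop :=
  ∀ φ : (Fin n → ℝ) → ℝ, ContDiffOn ℝ 2 φ Ω →
    ∀ x₀ ∈ Ω, IsLocalMinOn (fun x => w x - φ x) Ω x₀ →
      0 ≤ F x₀ (w x₀) (vgrad φ x₀) (vhess φ x₀)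

/-- Viscosity solution: both a viscosity subsolution and a viscosity supersolution. -/
def ViscositySolution {n : ℕ} (Ω : Set (Fin n → ℝ))
    (F : (Fin n → ℝ) → ℝ → (Fin n → ℝ) → Matrix (Fin n) (Fin n) ℝ → ℝ)
    (w : (Fin n → ℝ) → ℝ) : Prop :=
  ViscositySubsolution Ω F w ∧ ViscositySupersolution Ω F w

section helpers
variable {g : ℝ → ℝ}


lemma Gg_hasDerivAt (hg : Continuous g) (s : ℝ) : HasDerivAt (Gg g) (g s) s :=
  (hg.integral_hasStrictDerivAt 0 s).hasDerivAt

lemma Gg_contDiff (hg : Continuous g) : ContDiff ℝ 1 (Gg g) := by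
  rw [contDiff_one_iff_deriv]
  refine ⟨fun s => (Gg_hasDerivAt hg s).differentiableAt, ?_⟩
  have : deriv (Gg g) = g := funext fun s => (Gg_hasDerivAt hg s).deriv
  rw [this]; exact hg

lemma Gg_continuous (hg : Continuous g) : Continuous (Gg g) :=
  (Gg_contDiff hg).continuous

lemma Phig_hasDerivAt (hg : Continuous g) (t : ℝ) :
    HasDerivAt (Phig g) (Real.exp (Gg g t)) t :=
  ((Real.continuous_exp.comp (Gg_continuous hg)).integral_hasStrictDerivAt 0 t).hasDerivAt

lemma Phig_deriv (hg : Continuous g) : deriv (Phig g) = fun t => Real.exp (Gg g t) :=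
  funext fun t => (Phig_hasDerivAt hg t).deriv

lemma Phig_contDiff (hg : Continuous g) : ContDiff ℝ 2 (Phig g) := by
  rw [show (2 : WithTop ℕ∞) = 1 + 1 from rfl, contDiff_succ_iff_deriv]
  refine ⟨fun t => (Phig_hasDerivAt hg t).differentiableAt, by simp, ?_⟩
  rw [Phig_deriv hg]
  exact Real.contDiff_exp.comp (Gg_contDiff hg)

lemma Phig_strictMono (hg : Continuous g) : StrictMono (Phig g) :=
  strictMono_of_deriv_pos (fun t => by rw [Phig_deriv hg]; positivity)

section inv
variable {Φinv : ℝ → ℝ} (hg : Continuous g)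
  (hleft : ∀ t : ℝ, Φinv (Phig g t) = t) (hright : ∀ s : ℝ, Phig g (Φinv s) = s)

include hg hright in
lemma Phinv_strictMono : StrictMono Φinv := fun a b h =>
  (Phig_strictMono hg).lt_iff_lt.mp (by rw [hright, hright]; exact h)

include hleft in
lemma Phinv_surjective : Function.Surjective Φinv := fun t => ⟨Phig g t, hleft t⟩

include hg hleft hright in
lemma Phinv_continuous : Continuous Φinv :=
  ((Phinv_strictMono hg hright).orderIsoOfSurjective _
    (Phinv_surjective hleft)).continuous

include hg hleft hright in
lemma Phinv_hasDerivAt (s : ℝ) :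
    HasDerivAt Φinv (Real.exp (-(Gg g (Φinv s)))) s := by
  rw [Real.exp_neg]
  exact HasDerivAt.of_local_left_inverse (Phinv_continuous hg hleft hright).continuousAt
    (Phig_hasDerivAt hg (Φinv s)) (Real.exp_ne_zero _)
    (Filter.Eventually.of_forall hright)

include hg hleft hright in
lemma Phinv_deriv : deriv Φinv = fun s => Real.exp (-(Gg g (Φinv s))) :=
  funext fun s => (Phinv_hasDerivAt hg hleft hright s).deriv

include hg hleft hright in
lemma Phinv_contDiff1 : ContDiff ℝ 1 Φinv := by
  rw [contDiff_one_iff_deriv]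
  refine ⟨fun s => (Phinv_hasDerivAt hg hleft hright s).differentiableAt, ?_⟩
  rw [Phinv_deriv hg hleft hright]
  exact Real.continuous_exp.comp
    ((Gg_continuous hg).comp (Phinv_continuous hg hleft hright)).neg

include hg hleft hright in
lemma Phinv_contDiff : ContDiff ℝ 2 Φinv := by
  rw [show (2 : WithTop ℕ∞) = 1 + 1 from rfl, contDiff_succ_iff_deriv]
  refine ⟨fun s => (Phinv_hasDerivAt hg hleft hright s).differentiableAt, by simp, ?_⟩
  rw [Phinv_deriv hg hleft hright]
  exact Real.contDiff_exp.comp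
    (((Gg_contDiff hg).neg).comp (Phinv_contDiff1 hg hleft hright))

include hg hleft hright in
lemma Phinv_deriv2 (s : ℝ) :
    HasDerivAt (deriv Φinv)
      (Real.exp (-(Gg g (Φinv s))) * -(g (Φinv s) * Real.exp (-(Gg g (Φinv s))))) s := by
  rw [Phinv_deriv hg hleft hright]
  exact (((Gg_hasDerivAt hg (Φinv s)).comp s
    (Phinv_hasDerivAt hg hleft hright s)).neg).exp

end inv

end helpers

lemma vhess_isSymm {n : ℕ} {Ω : Set (Fin n → ℝ)} (hΩ : IsOpen Ω) {φ : (Fin n → ℝ) → ℝ}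
    (hφ : ContDiffOn ℝ 2 φ Ω) {x₀ : Fin n → ℝ} (hx₀ : x₀ ∈ Ω) :
    (vhess φ x₀).IsSymm := by
  have hct : ContDiffAt ℝ 2 φ x₀ := hφ.contDiffAt (hΩ.mem_nhds hx₀)
  have hsym : IsSymmSndFDerivAt ℝ φ x₀ := hct.isSymmSndFDerivAt (by simp)
  have hfd : DifferentiableAt ℝ (fderiv ℝ φ) x₀ :=
    (hct.fderiv_right (m := 1) le_rfl).differentiableAt one_ne_zero
  have key : ∀ v w : Fin n → ℝ, fderiv ℝ (fun y => fderiv ℝ φ y w) x₀ v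
      = fderiv ℝ (fderiv ℝ φ) x₀ v w := by
    intro v w
    have h : HasFDerivAt (fun y => fderiv ℝ φ y w)
        ((ContinuousLinearMap.apply ℝ ℝ w).comp (fderiv ℝ (fderiv ℝ φ) x₀)) x₀ :=
      (ContinuousLinearMap.apply ℝ ℝ w).hasFDerivAt.comp x₀ hfd.hasFDerivAt
    rw [h.fderiv]; rfl
  rw [Matrix.IsSymm]
  ext i j
  rw [Matrix.transpose_apply]
  show fderiv ℝ (fun y => fderiv ℝ φ y (Pi.single i 1)) x₀ (Pi.single j 1)
      = fderiv ℝ (fun y => fderiv ℝ φ y (Pi.single j 1)) x₀ (Pi.single i 1)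
  rw [key, key, hsym.eq]

lemma comp_vgrad_vhess {n : ℕ} {Ω : Set (Fin n → ℝ)} (hΩ : IsOpen Ω) {φ : (Fin n → ℝ) → ℝ}
    (hφ : ContDiffOn ℝ 2 φ Ω) {F : ℝ → ℝ} (hF : ContDiff ℝ 2 F) {x₀ : Fin n → ℝ} (hx₀ : x₀ ∈ Ω) :
    vgrad (F ∘ φ) x₀ = deriv F (φ x₀) • vgrad φ x₀ ∧
    vhess (F ∘ φ) x₀ = deriv F (φ x₀) • vhess φ x₀
      + deriv (deriv F) (φ x₀) • Matrix.vecMulVec (vgrad φ x₀) (vgrad φ x₀) := by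
  have hF1 : ContDiff ℝ 1 (deriv F) :=
    (contDiff_succ_iff_deriv.mp (show ContDiff ℝ (1+1) F from hF)).2.2
  have hct : ∀ x ∈ Ω, ContDiffAt ℝ 2 φ x := fun x hx => hφ.contDiffAt (hΩ.mem_nhds hx)
  have hdφ : ∀ x ∈ Ω, DifferentiableAt ℝ φ x := fun x hx =>
    (hct x hx).differentiableAt two_ne_zero
  have hchain : ∀ x ∈ Ω, HasFDerivAt (F ∘ φ) (deriv F (φ x) • fderiv ℝ φ x) x := fun x hx =>
    HasDerivAt.comp_hasFDerivAt x ((hF.differentiable two_ne_zero (φ x)).hasDerivAt)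
      (hdφ x hx).hasFDerivAt
  constructor
  · funext i
    simp [vgrad, (hchain x₀ hx₀).fderiv]
  · ext i j
    have hb : DifferentiableAt ℝ (fun y => fderiv ℝ φ y (Pi.single j 1)) x₀ := by
      have hfd : DifferentiableAt ℝ (fderiv ℝ φ) x₀ :=
        ((hct x₀ hx₀).fderiv_right (m := 1) le_rfl).differentiableAt one_ne_zero
      exact ((ContinuousLinearMap.apply ℝ ℝ (Pi.single j 1)).differentiable.differentiableAt).comp
        x₀ hfd
    have ha : DifferentiableAt ℝ (fun y => deriv F (φ y)) x₀ :=
      ((hF1.differentiable one_ne_zero) (φ x₀)).comp x₀ (hdφ x₀ hx₀)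
    have hEq : (fun y => fderiv ℝ (F ∘ φ) y (Pi.single j 1))
        =ᶠ[nhds x₀] (fun y => deriv F (φ y) * fderiv ℝ φ y (Pi.single j 1)) := by
      filter_upwards [hΩ.mem_nhds hx₀] with y hy
      rw [(hchain y hy).fderiv]; rfl
    have hfa : fderiv ℝ (fun y => deriv F (φ y)) x₀
        = deriv (deriv F) (φ x₀) • fderiv ℝ φ x₀ :=
      (HasDerivAt.comp_hasFDerivAt x₀ ((hF1.differentiable one_ne_zero (φ x₀)).hasDerivAt)
        (hdφ x₀ hx₀).hasFDerivAt).fderiv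
    have step : vhess (F ∘ φ) x₀ i j
        = fderiv ℝ (fun y => deriv F (φ y) * fderiv ℝ φ y (Pi.single j 1)) x₀ (Pi.single i 1) := by
      show fderiv ℝ (fun y => fderiv ℝ (F ∘ φ) y (Pi.single j 1)) x₀ (Pi.single i 1) = _
      rw [hEq.fderiv_eq]
    rw [step, fderiv_fun_mul ha hb, hfa]
    simp only [ContinuousLinearMap.add_apply, ContinuousLinearMap.smul_apply, smul_eq_mul,
      Matrix.add_apply, Matrix.smul_apply, Matrix.vecMulVec_apply, Pi.smul_apply]
    show deriv F (φ x₀) * (vhess φ x₀ i j) + fderiv ℝ φ x₀ (Pi.single j 1)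
        * (deriv (deriv F) (φ x₀) * fderiv ℝ φ x₀ (Pi.single i 1))
      = deriv F (φ x₀) * vhess φ x₀ i j
        + deriv (deriv F) (φ x₀) * (vgrad φ x₀ i * vgrad φ x₀ j)
    show _ = _ + deriv (deriv F) (φ x₀) * (fderiv ℝ φ x₀ (Pi.single i 1) * fderiv ℝ φ x₀ (Pi.single j 1))
    ring

lemma key_alg {n : ℕ} {Ω : Set (Fin n → ℝ)}
    (M N : (Fin n → ℝ) → (Fin n → ℝ) → Matrix (Fin n) (Fin n) ℝ → ℝ)
    (α : ℝ) (β : ℕ)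
    (h1 : ∀ x ∈ Ω, ∀ lam : ℝ, lam ≠ 0 → ∀ (p : Fin n → ℝ) (X : Matrix (Fin n) (Fin n) ℝ),
      X.IsSymm → M x (lam • p) X = |lam| ^ α * M x p X)
    (h2 : ∀ x ∈ Ω, ∀ (p : Fin n → ℝ) (X : Matrix (Fin n) (Fin n) ℝ), X.IsSymm →
      ∀ γ : ℝ, γ ≠ 0 → ∀ σ : ℝ,
        M x p (γ • X + σ • Matrix.vecMulVec p p)
          = γ ^ (β + 1) * M x p X + σ * γ ^ β * N x p X)
    {x₀ : Fin n → ℝ} (hx₀ : x₀ ∈ Ω)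
    (p : Fin n → ℝ) (X : Matrix (Fin n) (Fin n) ℝ) (hXs : X.IsSymm)
    (g : ℝ → ℝ) (t₀ : ℝ) :
    M x₀ (Real.exp (-(Gg g t₀)) • p)
        (Real.exp (-(Gg g t₀)) • X
          + (-(g t₀)) • Matrix.vecMulVec (Real.exp (-(Gg g t₀)) • p)
              (Real.exp (-(Gg g t₀)) • p))
      + g t₀ * N x₀ (Real.exp (-(Gg g t₀)) • p)
        (Real.exp (-(Gg g t₀)) • X
          + (-(g t₀)) • Matrix.vecMulVec (Real.exp (-(Gg g t₀)) • p)
              (Real.exp (-(Gg g t₀)) • p))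
      = Real.exp (-((α + β + 1) * Gg g t₀)) * M x₀ p X := by
  set L : ℝ := Real.exp (-(Gg g t₀)) with hLdef
  have hL : L ≠ 0 := Real.exp_ne_zero _
  set v : Fin n → ℝ := L • p with hv
  set W : Matrix (Fin n) (Fin n) ℝ := Matrix.vecMulVec v v with hW
  set Y : Matrix (Fin n) (Fin n) ℝ := L • X + (-(g t₀)) • W with hY
  have hXij : ∀ i j, X j i = X i j := fun i j => by
    rw [← Matrix.transpose_apply X i j, hXs]
  have hYs : Y.IsSymm := by
    rw [Matrix.IsSymm]
    ext i j
    rw [Matrix.transpose_apply]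
    simp only [hY, hW, Matrix.add_apply, Matrix.smul_apply, Matrix.vecMulVec_apply,
      smul_eq_mul, hXij j i]
    ring
  have e1 := h2 x₀ hx₀ v X hXs L hL (-(g t₀))
  have e2 := h2 x₀ hx₀ v X hXs L hL (-(g t₀) + 1)
  have e3 := h2 x₀ hx₀ v Y hYs 1 one_ne_zero 1
  have hmat : (1:ℝ) • Y + (1:ℝ) • Matrix.vecMulVec v v
      = L • X + (-(g t₀) + 1) • Matrix.vecMulVec v v := by
    simp only [hY, hW]
    module
  rw [hmat, e2] at e3
  simp only [one_pow, one_mul] at e3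
  -- e3 : L^(β+1) M v X + (-(g t₀)+1) L^β N v X = M v Y + N v Y
  have hN : N x₀ v Y = L ^ β * N x₀ v X := by
    rw [e1] at e3; linarith [e3]
  have e4 := h1 x₀ hx₀ L hL p X hXs
  have habs : |L| = L := abs_of_pos (Real.exp_pos _)
  have hcoef : (L:ℝ) ^ (β + 1) * L ^ α = Real.exp (-((α + β + 1) * Gg g t₀)) := by
    rw [hLdef, ← Real.rpow_natCast (Real.exp (-(Gg g t₀))) (β+1), ← Real.exp_mul,
      ← Real.exp_mul, ← Real.exp_add]
    push_cast
    ring_nf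
  calc M x₀ v Y + g t₀ * N x₀ v Y
      = (L ^ (β+1) * M x₀ v X + (-(g t₀)) * L ^ β * N x₀ v X)
        + g t₀ * (L ^ β * N x₀ v X) := by rw [e1, hN]
    _ = L ^ (β+1) * M x₀ v X := by ring
    _ = L ^ (β+1) * (|L| ^ α * M x₀ p X) := by rw [e4]
    _ = (L ^ (β+1) * L ^ α) * M x₀ p X := by rw [habs]; ring
    _ = Real.exp (-((α + β + 1) * Gg g t₀)) * M x₀ p X := by rw [hcoef]


lemma core_test {n : ℕ} {Ω : Set (Fin n → ℝ)} (hΩ : IsOpen Ω)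
    {g : ℝ → ℝ} (hg : Continuous g) {Φinv : ℝ → ℝ}
    (hleft : ∀ t : ℝ, Φinv (Phig g t) = t) (hright : ∀ s : ℝ, Phig g (Φinv s) = s)
    (u : (Fin n → ℝ) → ℝ) (φ : (Fin n → ℝ) → ℝ) (hφ : ContDiffOn ℝ 2 φ Ω)
    {x₀ : Fin n → ℝ} (hx₀ : x₀ ∈ Ω) :
    ∃ ψ : (Fin n → ℝ) → ℝ, ContDiffOn ℝ 2 ψ Ω ∧ ψ x₀ = u x₀ ∧
      (∀ x, Phig g (u x) - φ x ≤ Phig g (u x₀) - φ x₀ → u x - ψ x ≤ u x₀ - ψ x₀) ∧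
      (∀ x, Phig g (u x₀) - φ x₀ ≤ Phig g (u x) - φ x → u x₀ - ψ x₀ ≤ u x - ψ x) ∧
      vgrad ψ x₀ = Real.exp (-(Gg g (u x₀))) • vgrad φ x₀ ∧
      vhess ψ x₀ = Real.exp (-(Gg g (u x₀))) • vhess φ x₀
        + (-(g (u x₀))) • Matrix.vecMulVec (Real.exp (-(Gg g (u x₀))) • vgrad φ x₀)
            (Real.exp (-(Gg g (u x₀))) • vgrad φ x₀) := by
  have hinvmono : Monotone Φinv := (Phinv_strictMono hg hright).monotone
  set t₀ : ℝ := u x₀ with ht₀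
  set c : ℝ := Phig g t₀ - φ x₀ with hc
  set F : ℝ → ℝ := fun s => Φinv (s + c) with hFdef
  have hφc : φ x₀ + c = Phig g t₀ := by rw [hc]; ring
  have hψ0 : (F ∘ φ) x₀ = t₀ := by
    show Φinv (φ x₀ + c) = t₀
    rw [hφc, hleft]
  have hF2 : ContDiff ℝ 2 F :=
    (Phinv_contDiff hg hleft hright).comp (contDiff_id.add contDiff_const)
  obtain ⟨hg1, hh1⟩ := comp_vgrad_vhess hΩ hφ hF2 hx₀
  have hFd : ∀ s, HasDerivAt F (Real.exp (-(Gg g (Φinv (s + c))))) s := fun s => by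
    have h := (Phinv_hasDerivAt hg hleft hright (s + c)).comp s
      ((hasDerivAt_id s).add_const c)
    rw [mul_one] at h
    exact h
  have hderivF : deriv F = fun s => Real.exp (-(Gg g (Φinv (s + c)))) :=
    funext fun s => (hFd s).deriv
  have hinv0 : Φinv (φ x₀ + c) = t₀ := by rw [hφc, hleft]
  have dF0 : deriv F (φ x₀) = Real.exp (-(Gg g t₀)) := by
    rw [hderivF]; simp only [hinv0]
  have hderivF' : deriv F = fun s => deriv Φinv (s + c) := by
    rw [hderivF, Phinv_deriv hg hleft hright]
  have d2F : HasDerivAt (deriv F)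
      (Real.exp (-(Gg g t₀)) * -(g t₀ * Real.exp (-(Gg g t₀)))) (φ x₀) := by
    rw [hderivF']
    have := (Phinv_deriv2 hg hleft hright (φ x₀ + c)).comp (φ x₀)
      ((hasDerivAt_id (φ x₀)).add_const c)
    rw [hinv0, mul_one] at this
    exact this
  have d2F0 : deriv (deriv F) (φ x₀)
      = Real.exp (-(Gg g t₀)) * -(g t₀ * Real.exp (-(Gg g t₀))) := d2F.deriv
  refine ⟨F ∘ φ, hF2.comp_contDiffOn hφ, hψ0, ?_, ?_, ?_, ?_⟩
  · intro x hx
    have h1 : Phig g (u x) ≤ φ x + c := by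
      rw [hc] at hx ⊢; linarith
    have h2 : u x ≤ Φinv (φ x + c) := by
      have := hinvmono h1
      rwa [hleft] at this
    have : u x ≤ (F ∘ φ) x := h2
    rw [hψ0]; linarith
  · intro x hx
    have h1 : φ x + c ≤ Phig g (u x) := by
      rw [hc] at hx ⊢; linarith
    have h2 : Φinv (φ x + c) ≤ u x := by
      have := hinvmono h1
      rwa [hleft] at this
    have : (F ∘ φ) x ≤ u x := h2
    rw [hψ0]; linarith
  · rw [hg1, dF0]
  · rw [hh1, dF0, d2F0]
    ext i j
    simp only [Matrix.add_apply, Matrix.smul_apply, Matrix.vecMulVec_apply, Pi.smul_apply,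
      smul_eq_mul]
    ring

/-- Theorem 2, converse direction: if u is a continuous viscosity solution of
M(x,Dw,D²w) + g(w)N(x,Dw,D²w) + f(x,w) = 0 in Ω, then v = Φ_g ∘ u is a viscosity solution of
M(x,Dw,D²w) + h(x,w) = 0 in Ω. -/
theorem stmt7 {n : ℕ} (Ω : Set (Fin n → ℝ)) (hΩ : IsOpen Ω)
    (f : (Fin n → ℝ) → ℝ → ℝ)
    (hf : ContinuousOn (fun q : (Fin n → ℝ) × ℝ => f q.1 q.2) (Ω ×ˢ Set.univ))
    (g : ℝ → ℝ) (hg : Continuous g) (hg0 : g0cond g)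
    (M N : (Fin n → ℝ) → (Fin n → ℝ) → Matrix (Fin n) (Fin n) ℝ → ℝ)
    (hM : ContinuousOn
      (fun q : (Fin n → ℝ) × (Fin n → ℝ) × Matrix (Fin n) (Fin n) ℝ => M q.1 q.2.1 q.2.2)
      (Ω ×ˢ Set.univ))
    (α : ℝ) (β : ℕ)
    (h1 : ∀ x ∈ Ω, ∀ lam : ℝ, lam ≠ 0 → ∀ (p : Fin n → ℝ) (X : Matrix (Fin n) (Fin n) ℝ),
      X.IsSymm → M x (lam • p) X = |lam| ^ α * M x p X)
    (h2 : ∀ x ∈ Ω, ∀ (p : Fin n → ℝ) (X : Matrix (Fin n) (Fin n) ℝ), X.IsSymm →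
      ∀ γ : ℝ, γ ≠ 0 → ∀ σ : ℝ,
        M x p (γ • X + σ • Matrix.vecMulVec p p)
          = γ ^ (β + 1) * M x p X + σ * γ ^ β * N x p X)
    (Φinv : ℝ → ℝ) (hleft : ∀ t : ℝ, Φinv (Phig g t) = t)
    (hright : ∀ s : ℝ, Phig g (Φinv s) = s)
    (u : (Fin n → ℝ) → ℝ) (hu : ContinuousOn u Ω)
    (hsol : ViscositySolution Ω
      (fun x r p X => M x p X + g r * N x p X + f x r) u) :
    ViscositySolution Ω
      (fun x r p X => M x p X
        + Real.exp ((α + (β : ℝ) + 1) * Gg g (Φinv r)) * f x (Φinv r)) (Phig g ∘ u) := by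

  obtain ⟨hsub, hsup⟩ := hsol
  constructor
  · intro φ hφ x₀ hx₀ hmax
    obtain ⟨ψ, hψ, hψ0, hfwd, hbwd, hgr, hhe⟩ :=
      core_test hΩ hg hleft hright u φ hφ hx₀
    have hψmax : IsLocalMaxOn (fun x => u x - ψ x) Ω x₀ := by
      refine Filter.Eventually.mono hmax fun x hx => ?_
      exact hfwd x hx
    have hineq := hsub ψ hψ x₀ hx₀ hψmax
    have hXs := vhess_isSymm hΩ hφ hx₀
    beta_reduce at hineq
    rw [hgr, hhe] at hineq
    rw [ key_alg M N α β h1 h2 hx₀ (vgrad φ x₀) (vhess φ x₀) hXs g (u x₀)] at hineq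
    show M x₀ (vgrad φ x₀) (vhess φ x₀)
        + Real.exp ((α + ↑β + 1) * Gg g (Φinv (Phig g (u x₀))))
          * f x₀ (Φinv (Phig g (u x₀))) ≤ 0
    rw [hleft]
    have hE := (Real.exp_pos ((α + ↑β + 1) * Gg g (u x₀))).le
    have h3 := mul_le_mul_of_nonneg_left hineq hE
    have hEz : Real.exp ((α + ↑β + 1) * Gg g (u x₀))
        * Real.exp (-((α + ↑β + 1) * Gg g (u x₀))) = 1 := by
      rw [← Real.exp_add]; simp
    rw [mul_zero, mul_add, ← mul_assoc, hEz, one_mul] at h3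
    exact h3
  · intro φ hφ x₀ hx₀ hmin
    obtain ⟨ψ, hψ, hψ0, hfwd, hbwd, hgr, hhe⟩ :=
      core_test hΩ hg hleft hright u φ hφ hx₀
    have hψmin : IsLocalMinOn (fun x => u x - ψ x) Ω x₀ := by
      refine Filter.Eventually.mono hmin fun x hx => ?_
      exact hbwd x hx
    have hineq := hsup ψ hψ x₀ hx₀ hψmin
    have hXs := vhess_isSymm hΩ hφ hx₀
    beta_reduce at hineq
    rw [hgr, hhe] at hineq
    rw [ key_alg M N α β h1 h2 hx₀ (vgrad φ x₀) (vhess φ x₀) hXs g (u x₀)] at hineq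
    show 0 ≤ M x₀ (vgrad φ x₀) (vhess φ x₀)
        + Real.exp ((α + ↑β + 1) * Gg g (Φinv (Phig g (u x₀))))
          * f x₀ (Φinv (Phig g (u x₀)))
    rw [hleft]
    have hE := (Real.exp_pos ((α + ↑β + 1) * Gg g (u x₀))).le
    have h3 := mul_le_mul_of_nonneg_left hineq hE
    have hEz : Real.exp ((α + ↑β + 1) * Gg g (u x₀))
        * Real.exp (-((α + ↑β + 1) * Gg g (u x₀))) = 1 := by
      rw [← Real.exp_add]; simp
    rw [mul_zero, mul_add, ← mul_assoc, hEz, one_mul] at h3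
    exact h3
end

section
/- Let Ω ⊆ ℝⁿ be open, f : Ω×ℝ → ℝ continuous, and g : ℝ → ℝ continuous satisfying (g₀). Set h(x, s) = e^{3G(Φ_g⁻¹(s))} f(x, Φ_g⁻¹(s)). Then u ∈ C²(Ω) satisfies Δ_∞u + g(u)|Du|⁴ + f(x, u) = 0 at every point of Ω if and only if v = Φ_g ∘ u satisfies Δ_∞v + h(x, v) = 0 at every point of Ω. -/
open Real Filter Set

/-- Infinity-Laplacian `Δ_∞ u = ⟨D²u Du, Du⟩`. -/
noncomputable def infLap {n : ℕ} (u : (Fin n → ℝ) → ℝ) (x : Fin n → ℝ) : ℝ :=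
  dotProduct (Matrix.mulVec (vhess u x) (vgrad u x)) (vgrad u x)

/-- Squared Euclidean norm `|p|²` of a vector. -/
noncomputable def normSq {n : ℕ} (p : Fin n → ℝ) : ℝ := ∑ i, p i ^ 2
lemma alg {n : ℕ} (H : Matrix (Fin n) (Fin n) ℝ) (p : Fin n → ℝ) (a b : ℝ) :
    dotProduct
      (Matrix.mulVec (Matrix.of fun i j => a * H i j + a * b * p i * p j) (fun i => a * p i))
      (fun i => a * p i)
    = a ^ 3 * (dotProduct (Matrix.mulVec H p) p) + a ^ 3 * b * (∑ i, p i ^ 2) ^ 2 := by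
  simp only [dotProduct, Matrix.mulVec, Matrix.of_apply, add_mul, mul_add,
    Finset.sum_add_distrib, Finset.sum_mul, Finset.mul_sum, sq]
  ring_nf
  congr 1
  refine Finset.sum_congr rfl fun i _ => Finset.sum_congr rfl fun j _ => by ring


/-- u ∈ C²(Ω) solves Δ_∞u + g(u)|Du|⁴ + f(x,u) = 0 iff v = Φ_g ∘ u solves
Δ_∞v + h(x,v) = 0 with h(x,s) = e^{3G(Φ_g⁻¹(s))} f(x, Φ_g⁻¹(s)). -/
theorem stmt9 {n : ℕ} (Ω : Set (Fin n → ℝ)) (hΩ : IsOpen Ω)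
    (f : (Fin n → ℝ) → ℝ → ℝ)
    (hf : ContinuousOn (fun q : (Fin n → ℝ) × ℝ => f q.1 q.2) (Ω ×ˢ Set.univ))
    (g : ℝ → ℝ) (hg : Continuous g) (hg0 : g0cond g)
    (Φinv : ℝ → ℝ) (hleft : ∀ t : ℝ, Φinv (Phig g t) = t)
    (hright : ∀ s : ℝ, Phig g (Φinv s) = s)
    (u : (Fin n → ℝ) → ℝ) (hu : ContDiffOn ℝ 2 u Ω) :
    (∀ x ∈ Ω, infLap u x + g (u x) * (normSq (vgrad u x)) ^ 2 + f x (u x) = 0) ↔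
    (∀ x ∈ Ω, infLap (Phig g ∘ u) x
        + Real.exp (3 * Gg g (Φinv ((Phig g ∘ u) x))) * f x (Φinv ((Phig g ∘ u) x)) = 0) := by
  have hG : ∀ s, HasDerivAt (Gg g) (g s) s := fun s =>
    intervalIntegral.integral_hasDerivAt_right (hg.intervalIntegrable _ _)
      (hg.stronglyMeasurableAtFilter _ _) hg.continuousAt
  have hE : Continuous fun s => Real.exp (Gg g s) :=
    (continuous_iff_continuousAt.2 fun s => (hG s).continuousAt).rexp
  have hΦ : ∀ t, HasDerivAt (Phig g) (Real.exp (Gg g t)) t := fun t =>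
    intervalIntegral.integral_hasDerivAt_right (hE.intervalIntegrable _ _)
      (hE.stronglyMeasurableAtFilter _ _) hE.continuousAt
  have hud : ∀ y ∈ Ω, DifferentiableAt ℝ u y := fun y hy =>
    (hu.contDiffAt (hΩ.mem_nhds hy)).differentiableAt (by norm_num)
  have hgradeq : ∀ y ∈ Ω, fderiv ℝ (Phig g ∘ u) y = Real.exp (Gg g (u y)) • fderiv ℝ u y :=
    fun y hy => ((hΦ (u y)).comp_hasFDerivAt y (hud y hy).hasFDerivAt).fderiv
  -- key pointwise identity
  have key : ∀ x ∈ Ω, infLap (Phig g ∘ u) x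
      = Real.exp (Gg g (u x)) ^ 3 * (infLap u x + g (u x) * (normSq (vgrad u x)) ^ 2) := by
    intro x hx
    set a := Real.exp (Gg g (u x)) with ha
    set b := g (u x) with hb
    have hdf : DifferentiableAt ℝ (fderiv ℝ u) x := by
      have h2 : ContDiffAt ℝ 2 u x := hu.contDiffAt (hΩ.mem_nhds hx)
      exact (h2.fderiv_right (m := 1) (by norm_num)).differentiableAt one_ne_zero
    have hvg : vgrad (Phig g ∘ u) x = fun i => a * vgrad u x i := by
      funext i
      simp only [vgrad, hgradeq x hx, ContinuousLinearMap.smul_apply, smul_eq_mul]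
      rfl
    have hvh : vhess (Phig g ∘ u) x
        = Matrix.of fun i j => a * vhess u x i j + a * b * vgrad u x i * vgrad u x j := by
      funext i j
      have hEv : (fun y => fderiv ℝ (Phig g ∘ u) y (Pi.single j 1)) =ᶠ[nhds x]
          (fun y => Real.exp (Gg g (u y)) * fderiv ℝ u y (Pi.single j 1)) := by
        filter_upwards [hΩ.mem_nhds hx] with y hy
        rw [hgradeq y hy]; simp
      have hA : HasFDerivAt (fun y => Real.exp (Gg g (u y)))
          ((a * b) • fderiv ℝ u x) x :=
        ((hG (u x)).exp).comp_hasFDerivAt x (hud x hx).hasFDerivAt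
      have hB : HasFDerivAt (fun y => fderiv ℝ u y (Pi.single j 1))
          ((ContinuousLinearMap.apply ℝ ℝ (Pi.single j 1 : Fin n → ℝ)).comp
            (fderiv ℝ (fderiv ℝ u) x)) x :=
        (ContinuousLinearMap.apply ℝ ℝ (Pi.single j 1 : Fin n → ℝ)).hasFDerivAt.comp x
          hdf.hasFDerivAt
      have hAB := hA.mul hB
      have : fderiv ℝ (fun y => fderiv ℝ (Phig g ∘ u) y (Pi.single j 1)) x
          = fderiv ℝ (fun y => Real.exp (Gg g (u y)) * fderiv ℝ u y (Pi.single j 1)) x :=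
        hEv.fderiv_eq
      simp only [vhess, Matrix.of_apply]
      rw [this, HasFDerivAt.fderiv (f := fun y => Real.exp (Gg g (u y)) * fderiv ℝ u y (Pi.single j 1)) hAB, hB.fderiv]
      simp only [ContinuousLinearMap.add_apply, ContinuousLinearMap.smul_apply,
        ContinuousLinearMap.comp_apply, ContinuousLinearMap.apply_apply, smul_eq_mul, vgrad]
      ring
    simp only [infLap, normSq, hvg, hvh]
    rw [alg (vhess u x) (vgrad u x) a b]
    ring
  have hinv : ∀ x, Φinv ((Phig g ∘ u) x) = u x := fun x => hleft (u x)
  have hexp3 : ∀ x, Real.exp (3 * Gg g (u x)) = Real.exp (Gg g (u x)) ^ 3 := by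
    intro x; rw [← Real.exp_nat_mul]; norm_num
  constructor
  · intro h x hx
    rw [key x hx, hinv, hexp3]
    have h0 := h x hx
    linear_combination Real.exp (Gg g (u x)) ^ 3 * h0
  · intro h x hx
    have h1 := h x hx
    rw [key x hx, hinv, hexp3] at h1
    have hne : Real.exp (Gg g (u x)) ^ 3 ≠ 0 := by positivity
    have h2 : Real.exp (Gg g (u x)) ^ 3 *
        (infLap u x + g (u x) * (normSq (vgrad u x)) ^ 2 + f x (u x)) = 0 := by
      linear_combination h1
    exact (mul_eq_zero.mp h2).resolve_left hne
end

section
/- Let Ω ⊆ ℝⁿ be open, f : Ω×ℝ → ℝ continuous, and g : ℝ → ℝ continuous satisfying (g₀). Set h(x, s) = e^{G(Φ_g⁻¹(s))} f(x, Φ_g⁻¹(s)). Suppose u ∈ C²(Ω) satisfies Du(x) ≠ 0 for all x ∈ Ω. Then u satisfies Δ_∞u/|Du|² + g(u)|Du|² + f(x, u) = 0 at every point of Ω if and only if v = Φ_g ∘ u (which also satisfies Dv ≠ 0 in Ω) satisfies Δ_∞v/|Dv|² + h(x, v) = 0 at every point of Ω. -/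
open Real Filter Set

/-- game-theoretic / normalized infinity-Laplacian: for u ∈ C²(Ω) with
Du ≠ 0 in Ω, u solves Δ_∞u/|Du|² + g(u)|Du|² + f(x,u) = 0 iff v = Φ_g ∘ u (which also has
Dv ≠ 0 in Ω) solves Δ_∞v/|Dv|² + h(x,v) = 0, where h(x,s) = e^{G(Φ_g⁻¹(s))} f(x, Φ_g⁻¹(s)). -/
theorem stmt19 {n : ℕ} (Ω : Set (Fin n → ℝ)) (hΩ : IsOpen Ω)
    (f : (Fin n → ℝ) → ℝ → ℝ)
    (hf : ContinuousOn (fun q : (Fin n → ℝ) × ℝ => f q.1 q.2) (Ω ×ˢ Set.univ))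
    (g : ℝ → ℝ) (hg : Continuous g) (hg0 : g0cond g)
    (Φinv : ℝ → ℝ) (hleft : ∀ t : ℝ, Φinv (Phig g t) = t)
    (hright : ∀ s : ℝ, Phig g (Φinv s) = s)
    (u : (Fin n → ℝ) → ℝ) (hu : ContDiffOn ℝ 2 u Ω)
    (hDu : ∀ x ∈ Ω, vgrad u x ≠ 0) :
    (∀ x ∈ Ω, vgrad (Phig g ∘ u) x ≠ 0) ∧
    ((∀ x ∈ Ω, infLap u x / normSq (vgrad u x)
        + g (u x) * normSq (vgrad u x) + f x (u x) = 0) ↔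
     (∀ x ∈ Ω, infLap (Phig g ∘ u) x / normSq (vgrad (Phig g ∘ u) x)
        + Real.exp (Gg g (Φinv ((Phig g ∘ u) x))) * f x (Φinv ((Phig g ∘ u) x)) = 0)) := by
  have hGd : ∀ t, HasDerivAt (Gg g) (g t) t := fun t =>
    intervalIntegral.integral_hasDerivAt_right (hg.intervalIntegrable _ _)
      (hg.stronglyMeasurableAtFilter _ _) hg.continuousAt
  have hGcont : Continuous (Gg g) :=
    continuous_iff_continuousAt.mpr fun t => (hGd t).differentiableAt.continuousAt
  have hEcont : Continuous fun s => Real.exp (Gg g s) := Real.continuous_exp.comp hGcont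
  have hΦd : ∀ t, HasDerivAt (Phig g) (Real.exp (Gg g t)) t := fun t =>
    intervalIntegral.integral_hasDerivAt_right (hEcont.intervalIntegrable _ _)
      (hEcont.stronglyMeasurableAtFilter _ _) hEcont.continuousAt
  -- differentiability of u on Ω
  have hud : ∀ y ∈ Ω, HasFDerivAt u (fderiv ℝ u y) y := fun y hy =>
    (((hu.contDiffAt (hΩ.mem_nhds hy)).differentiableAt (by norm_num)).hasFDerivAt)
  -- derivative of v = Phig g ∘ u on Ω
  have hA : ∀ y ∈ Ω, HasFDerivAt (Phig g ∘ u)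
      (Real.exp (Gg g (u y)) • fderiv ℝ u y) y := fun y hy =>
    (hΦd (u y)).comp_hasFDerivAt y (hud y hy)
  have hgradv : ∀ y ∈ Ω, ∀ i, vgrad (Phig g ∘ u) y i
      = Real.exp (Gg g (u y)) * vgrad u y i := by
    intro y hy i
    unfold vgrad
    rw [(hA y hy).fderiv]
    simp
  have hgradv' : ∀ y ∈ Ω, vgrad (Phig g ∘ u) y = Real.exp (Gg g (u y)) • vgrad u y := by
    intro y hy
    funext i
    rw [hgradv y hy i]
    simp
  have hDv : ∀ x ∈ Ω, vgrad (Phig g ∘ u) x ≠ 0 := by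
    intro x hx
    rw [hgradv' x hx]
    exact smul_ne_zero (Real.exp_ne_zero _) (hDu x hx)
  refine ⟨hDv, ?_⟩
  -- key pointwise identity
  have key : ∀ x ∈ Ω,
      infLap (Phig g ∘ u) x / normSq (vgrad (Phig g ∘ u) x)
        + Real.exp (Gg g (Φinv ((Phig g ∘ u) x))) * f x (Φinv ((Phig g ∘ u) x))
      = Real.exp (Gg g (u x)) * (infLap u x / normSq (vgrad u x)
        + g (u x) * normSq (vgrad u x) + f x (u x)) := by
    intro x hx
    set e := Real.exp (Gg g (u x)) with he
    -- second derivative facts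
    have hcd2 : ContDiffAt ℝ 2 u x := hu.contDiffAt (hΩ.mem_nhds hx)
    have hD2 : DifferentiableAt ℝ (fderiv ℝ u) x := by
      have h1 : ContDiffAt ℝ 1 (fderiv ℝ u) x := hcd2.fderiv_right (by norm_num)
      exact h1.differentiableAt (by norm_num)
    set B := fderiv ℝ (fderiv ℝ u) x with hB
    have hFj : ∀ j : Fin n, HasFDerivAt (fun y => fderiv ℝ u y (Pi.single j 1))
        ((ContinuousLinearMap.apply ℝ ℝ (Pi.single j 1)).comp B) x := fun j =>
      (ContinuousLinearMap.apply ℝ ℝ ((Pi.single j 1 : Fin n → ℝ))).hasFDerivAt.comp x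
        hD2.hasFDerivAt
    have hHu : ∀ i j, vhess u x i j = B (Pi.single i 1) (Pi.single j 1) := by
      intro i j
      show fderiv ℝ (fun y => fderiv ℝ u y (Pi.single j 1)) x (Pi.single i 1) = _
      rw [(hFj j).fderiv]
      simp
    have hc : HasFDerivAt (fun y => Real.exp (Gg g (u y)))
        ((e * g (u x)) • fderiv ℝ u x) x := by
      have := ((hGd (u x)).exp).comp_hasFDerivAt x (hud x hx)
      exact this
    -- hessian of v
    have hHv : ∀ i j, vhess (Phig g ∘ u) x i j
        = e * vhess u x i j + e * g (u x) * vgrad u x i * vgrad u x j := by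
      intro i j
      have hev : (fun y => fderiv ℝ (Phig g ∘ u) y (Pi.single j 1))
          =ᶠ[nhds x] fun y => Real.exp (Gg g (u y)) * fderiv ℝ u y (Pi.single j 1) := by
        filter_upwards [hΩ.mem_nhds hx] with y hy
        rw [(hA y hy).fderiv]
        simp
      have hprod : HasFDerivAt
          (fun y => Real.exp (Gg g (u y)) * fderiv ℝ u y (Pi.single j 1))
          (e • ((ContinuousLinearMap.apply ℝ ℝ (Pi.single j 1)).comp B)
            + (fderiv ℝ u x (Pi.single j 1)) • ((e * g (u x)) • fderiv ℝ u x)) x :=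
        hc.mul (hFj j)
      show fderiv ℝ (fun y => fderiv ℝ (Phig g ∘ u) y (Pi.single j 1)) x (Pi.single i 1) = _
      rw [hev.fderiv_eq, hprod.fderiv]
      simp only [ContinuousLinearMap.add_apply, ContinuousLinearMap.smul_apply,
        ContinuousLinearMap.comp_apply, ContinuousLinearMap.apply_apply, smul_eq_mul]
      rw [hHu i j]
      show e * (B (Pi.single i 1)) (Pi.single j 1) + _ = _
      unfold vgrad
      ring
    -- sums
    have hgx : ∀ i, vgrad (Phig g ∘ u) x i = e * vgrad u x i := hgradv x hx
    set Du := vgrad u x with hDudef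
    set S := normSq Du with hSdef
    have hSexp : S = ∑ j, Du j ^ 2 := rfl
    have hnormv : normSq (vgrad (Phig g ∘ u) x) = e ^ 2 * S := by
      unfold normSq
      rw [hSexp, Finset.mul_sum]
      exact Finset.sum_congr rfl fun i _ => by rw [hgx]; ring
    have hLu : infLap u x = ∑ i, (∑ j, vhess u x i j * Du j) * Du i := rfl
    have hLv : infLap (Phig g ∘ u) x
        = e ^ 3 * (g (u x) * S * S) + e ^ 3 * infLap u x := by
      have step : infLap (Phig g ∘ u) x
          = ∑ i, (∑ j, vhess (Phig g ∘ u) x i j * vgrad (Phig g ∘ u) x j)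
              * vgrad (Phig g ∘ u) x i := rfl
      rw [step]
      have inner : ∀ i, (∑ j, vhess (Phig g ∘ u) x i j * vgrad (Phig g ∘ u) x j)
          = (e ^ 2 * g (u x) * Du i) * S + e ^ 2 * ∑ j, vhess u x i j * Du j := by
        intro i
        have : ∀ j, vhess (Phig g ∘ u) x i j * vgrad (Phig g ∘ u) x j
            = (e ^ 2 * g (u x) * Du i) * Du j ^ 2 + e ^ 2 * (vhess u x i j * Du j) := by
          intro j
          rw [hHv i j, hgx j]
          ring
        rw [Finset.sum_congr rfl fun j _ => this j, Finset.sum_add_distrib,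
          ← Finset.mul_sum, ← Finset.mul_sum, ← hSexp]
      rw [Finset.sum_congr rfl fun i _ => by rw [inner i, hgx i]]
      have : ∀ i, ((e ^ 2 * g (u x) * Du i) * S + e ^ 2 * ∑ j, vhess u x i j * Du j)
          * (e * Du i)
          = (e ^ 3 * (g (u x) * S)) * Du i ^ 2
            + e ^ 3 * ((∑ j, vhess u x i j * Du j) * Du i) := by
        intro i; ring
      rw [Finset.sum_congr rfl fun i _ => this i, Finset.sum_add_distrib,
        ← Finset.mul_sum, ← Finset.mul_sum, ← hSexp, ← hLu]
      ring
    -- positivity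
    have hSne : S ≠ 0 := by
      have h0 : ∃ i, Du i ≠ 0 := Function.ne_iff.mp (hDu x hx)
      obtain ⟨i, hi⟩ := h0
      have : 0 < S := by
        rw [hSexp]
        exact Finset.sum_pos' (fun j _ => sq_nonneg _)
          ⟨i, Finset.mem_univ i, by positivity⟩
      exact ne_of_gt this
    have hene : e ≠ 0 := Real.exp_ne_zero _
    have hvx : (Phig g ∘ u) x = Phig g (u x) := rfl
    rw [hvx, hleft (u x), hLv, hnormv]
    field_simp
    ring
  constructor
  · intro h x hx
    rw [key x hx, h x hx, mul_zero]
  · intro h x hx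
    have := key x hx
    rw [h x hx] at this
    rcases mul_eq_zero.mp this.symm with h1 | h2
    · exact absurd h1 (Real.exp_ne_zero _)
    · exact h2
end
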